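/- Let C_n denote the n-th Catalan number and write B_n = binom(2n,n). For all integers p ≥ 1 and q ≥ 1, (p/(p+q)) · binom(2p,p) · binom(2q,q) = 2 · ∑_{j=q}^{p+q-1} C_j · binom(2(p+q-1-j), p+q-1-j). In particular the left-hand side is an integer times a rational expression that equals the manifestly integral right-hand side. -/
import Mathlib

lemma cat_div (q : ℕ) : (catalan q : ℚ) = Nat.centralBinom q / (q + 1) := by
  have h : ((q : ℚ) + 1) * catalan q = Nat.centralBinom q := by
    exact_mod_cast succ_mul_catalan_eq_centralBinom q
  rw [eq_div_iff (by positivity : ((q : ℚ) + 1) ≠ 0)]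
  linear_combination h

lemma cb_succ (p : ℕ) :
    (Nat.centralBinom (p + 1) : ℚ) = 2 * (2 * p + 1) * Nat.centralBinom p / (p + 1) := by
  have h : ((p : ℚ) + 1) * Nat.centralBinom (p + 1) = 2 * (2 * p + 1) * Nat.centralBinom p := by
    exact_mod_cast Nat.succ_mul_centralBinom_succ p
  rw [eq_div_iff (by positivity : ((p : ℚ) + 1) ≠ 0)]
  linear_combination h

/-- For `p, q ≥ 1`,
`(p/(p+q))·binom(2p,p)·binom(2q,q) = 2·∑_{j=q}^{p+q-1} Cⱼ·binom(2(p+q-1-j), p+q-1-j)`. -/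
theorem stmt_7 (p q : ℕ) (hp : 1 ≤ p) (hq : 1 ≤ q) :
    ((p : ℚ) / (p + q)) * Nat.centralBinom p * Nat.centralBinom q =
      2 * ∑ j ∈ Finset.Icc q (p + q - 1),
        (catalan j : ℚ) * Nat.centralBinom (p + q - 1 - j) := by
  induction p, hp using Nat.le_induction generalizing q with
  | base =>
      rw [show 1 + q - 1 = q from by omega, Finset.Icc_self, Finset.sum_singleton,
        Nat.sub_self, Nat.centralBinom_zero, cat_div q]
      have hq1 : ((q : ℚ) + 1) ≠ 0 := by positivity
      rw [show Nat.centralBinom 1 = 2 from rfl]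
      push_cast
      rw [show (1 : ℚ) + q = q + 1 by ring]
      ring
  | succ p hp ih =>
      have ih' := ih (q + 1) (by omega)
      rw [show p + (q + 1) - 1 = p + q from by omega] at ih'
      rw [show p + 1 + q - 1 = p + q from by omega]
      rw [Finset.Icc_eq_cons_Ioc (by omega : q ≤ p + q), Finset.sum_cons,
        ← Finset.Icc_add_one_left_eq_Ioc]
      rw [Nat.add_sub_cancel]
      rw [mul_add, ← ih']
      rw [cat_div q, cb_succ p, cb_succ q]
      have h1 : ((q : ℚ) + 1) ≠ 0 := by positivity
      have h2 : ((p : ℚ) + 1) ≠ 0 := by positivity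
      have h3 : ((p : ℚ) + 1 + q) ≠ 0 := by positivity
      have h4 : ((p : ℚ) + (q + 1)) ≠ 0 := by positivity
      push_cast
      field_simp
      ring
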